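/- The tests rwl_2 and rawl_2⁺ are incomparable in distinguishing power. Specifically: (1) there exist a knowledge graph G with pairwise coloring η and pairs (u,v), (u',v') such that rwl_2^{(t)}(G,u,v) = rwl_2^{(t)}(G,u',v') for all t ≥ 0 but rawl_2⁺^{(1)}(G,u,v) ≠ rawl_2⁺^{(1)}(G,u',v'); and (2) there exist a knowledge graph G' with pairwise coloring η' and pairs (u,v), (u',v') such that rawl_2⁺^{(t)}(G',u,v) = rawl_2⁺^{(t)}(G',u',v') for all t ≥ 0 but rwl_2^{(1)}(G',u,v) ≠ rwl_2^{(1)}(G',u',v'). -/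

import Mathlib

/-- A knowledge graph: a finite set of facts `r(u,v)` (stored as triples `(r,u,v)`)
together with a node coloring. -/
structure KG (V R D : Type) where
  edges : Finset (R × V × V)
  color : V → D

namespace KG

variable {V R D D₂ X : Type}

/-- For a fact `r(u,v)` we say `u ∈ N_r(v)`.  `G.msgMS g v` is the multiset
`{{ (g w, r) : w ∈ N_r(v), r ∈ R }}`. -/
def msgMS [DecidableEq V] (G : KG V R D) (g : V → X) (v : V) : Multiset (X × R) :=
  (G.edges.val.filter (fun e => e.2.2 = v)).map (fun e => (g e.2.1, e.1))

end KG

/-- Color type of the relational local 1-WL test after `t` rounds (τ is the identity pairing). -/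
def Color1 (D R : Type) : ℕ → Type
  | 0 => D
  | t + 1 => Color1 D R t × Multiset (Color1 D R t × R)

/-- The relational local 1-WL test `rwl₁`. -/
def rwl1 {V R D : Type} [DecidableEq V] (G : KG V R D) : (t : ℕ) → V → Color1 D R t
  | 0 => G.color
  | t + 1 => fun v => (rwl1 G t v, G.msgMS (rwl1 G t) v)

/-- The relational asymmetric local 2-WL test `rawl₂` with initial pairwise coloring `η`. -/
def rawl2 {V R D D₂ : Type} [DecidableEq V] (G : KG V R D) (η : V → V → D₂) :
    (t : ℕ) → V → V → Color1 D₂ R t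
  | 0 => η
  | t + 1 => fun u v => (rawl2 G η t u v, G.msgMS (rawl2 G η t u) v)

/-- Color type of the relational symmetric local 2-WL test after `t` rounds. -/
def Color2 (D R : Type) : ℕ → Type
  | 0 => D
  | t + 1 => Color2 D R t × Multiset (Color2 D R t × R) × Multiset (Color2 D R t × R)

/-- The relational symmetric local 2-WL test `rwl₂` with initial pairwise coloring `η`. -/
def rwl2 {V R D D₂ : Type} [DecidableEq V] (G : KG V R D) (η : V → V → D₂) :
    (t : ℕ) → V → V → Color2 D₂ R t
  | 0 => η
  | t + 1 => fun u v =>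
      (rwl2 G η t u v, G.msgMS (fun w => rwl2 G η t w v) u, G.msgMS (rwl2 G η t u) v)

/-- The augmented knowledge graph `G⁺` with fresh inverse relations (`Sum.inr r` is `r⁻`). -/
def KG.aug {V R D : Type} [DecidableEq V] [DecidableEq R] (G : KG V R D) : KG V (R ⊕ R) D where
  edges := G.edges.image (fun e => (Sum.inl e.1, e.2)) ∪
    (G.edges.filter (fun e => e.2.1 ≠ e.2.2)).image (fun e => (Sum.inr e.1, e.2.2, e.2.1))
  color := G.color

/-- The graph `G²` of pairs: facts `r((u,w),(u,v))` for `r(w,v) ∈ E`, colored by `η`. -/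
def KG.sq {V R D D₂ : Type} [Fintype V] [DecidableEq V] [DecidableEq R]
    (G : KG V R D) (η : V → V → D₂) : KG (V × V) R D₂ where
  edges := (Finset.univ ×ˢ G.edges).image
      (fun p => (p.2.1, (p.1, p.2.2.1), (p.1, p.2.2.2)))
  color := fun p => η p.1 p.2

/-- A relational message passing neural network (R-MPNN) with feature dimensions `d t`:
a history function `f` (non-decreasing, `f t ≤ t`) and, per layer, arbitrary
relation-specific message functions, an aggregation on finite multisets and an update. -/
structure RMPNN (R : Type) (d : ℕ → ℕ) where
  f : ℕ → ℕ
  f_mono : Monotone f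
  f_le : ∀ t, f t ≤ t
  M : ℕ → Type
  A : ℕ → Type
  msg : (t : ℕ) → R → (Fin (d t) → ℝ) → M t
  agg : (t : ℕ) → Multiset (M t) → A t
  upd : (t : ℕ) → (Fin (d (f t)) → ℝ) → A t → Fin (d (t + 1)) → ℝ

/-- Features `h^(t)_v` computed by an R-MPNN on `G` from initial features `x`. -/
def RMPNN.h {V R D : Type} [DecidableEq V] {d : ℕ → ℕ} (N : RMPNN R d) (G : KG V R D)
    (x : V → Fin (d 0) → ℝ) : (t : ℕ) → V → Fin (d t) → ℝ
  | 0 => x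
  | t + 1 => fun v =>
      N.upd t (N.h G x (N.f t) v)
        (N.agg t ((G.edges.val.filter (fun e => e.2.2 = v)).map
          (fun e => N.msg t e.1 (N.h G x t e.2.1))))
termination_by t => t
decreasing_by
  · exact Nat.lt_succ_of_le (N.f_le t)
  · exact Nat.lt_succ_self t

/-- A conditional message passing neural network (C-MPNN) with feature dimensions `d t`;
the relation-specific message functions additionally take the query relation. -/
structure CMPNN (R : Type) (d : ℕ → ℕ) where
  f : ℕ → ℕ
  f_mono : Monotone f
  f_le : ∀ t, f t ≤ t
  M : ℕ → Type
  A : ℕ → Type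
  msg : (t : ℕ) → R → (Fin (d t) → ℝ) → R → M t
  agg : (t : ℕ) → Multiset (M t) → A t
  upd : (t : ℕ) → (Fin (d (f t)) → ℝ) → A t → Fin (d (t + 1)) → ℝ

/-- Features `h^(t)_{v|u,q}` computed by a C-MPNN on `G` for query `q` with
initialization `δ`; `CMPNN.h N G q δ t u v = h_q^(t)(u,v)`. -/
def CMPNN.h {V R D : Type} [DecidableEq V] {d : ℕ → ℕ} (N : CMPNN R d) (G : KG V R D)
    (q : R) (δ : V → V → R → Fin (d 0) → ℝ) : (t : ℕ) → V → V → Fin (d t) → ℝ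
  | 0 => fun u v => δ u v q
  | t + 1 => fun u v =>
      N.upd t (N.h G q δ (N.f t) u v)
        (N.agg t ((G.edges.val.filter (fun e => e.2.2 = v)).map
          (fun e => N.msg t e.1 (N.h G q δ t u e.2.1) q)))
termination_by t => t
decreasing_by
  · exact Nat.lt_succ_of_le (N.f_le t)
  · exact Nat.lt_succ_self t

-- example graph
def G0 : KG (Fin 3) Unit Unit := ⟨{((), 0, 1)}, fun _ => ()⟩

def η0 : Fin 3 → Fin 3 → Unit := fun _ _ => ()

lemma msg0 (g : Fin 3 → X) : G0.msgMS g 0 = 0 := by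
  simp [KG.msgMS, G0]

lemma msg2 (g : Fin 3 → X) : G0.msgMS g 2 = 0 := by
  simp [KG.msgMS, G0]

lemma augedges : G0.aug.edges = {(Sum.inl (), 0, 1), (Sum.inr (), 1, 0)} := by
  decide

lemma part1_eq : ∀ t, rwl2 G0 η0 t 0 0 = rwl2 G0 η0 t 2 2 := by
  intro t
  induction t with
  | zero => rfl
  | succ t ih => simp [rwl2, ih, msg0, msg2]; rfl

lemma rawl2_const_indep {V R : Type} [DecidableEq V] (G : KG V R Unit) :
    ∀ t (u u' : V), rawl2 G (fun _ _ => ()) t u = rawl2 G (fun _ _ => ()) t u' := by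
  intro t
  induction t with
  | zero => intro u u'; rfl
  | succ t ih => intro u u'; funext v; simp [rawl2, ih u u']; rfl

lemma part1_ne : rawl2 G0.aug η0 1 0 0 ≠ rawl2 G0.aug η0 1 2 2 := by
  intro h
  have h2 := congrArg Prod.snd h
  simp [rawl2, KG.msgMS, augedges, η0, Multiset.filter_singleton] at h2

lemma part2_ne : rwl2 G0 η0 1 1 2 ≠ rwl2 G0 η0 1 0 2 := by
  intro h
  have h2 := congrArg (fun p => p.2.1) h
  simp [rwl2, KG.msgMS, G0, η0, Multiset.filter_singleton] at h2


/-- The tests `rwl₂` and `rawl₂⁺` are incomparable in distinguishing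
power: (1) some graph has pairs identified by `rwl₂` at every round but distinguished by
`rawl₂⁺` after one round, and (2) some graph has pairs identified by `rawl₂⁺` at every
round but distinguished by `rwl₂` after one round. -/
theorem rwl2_rawl2plus_incomparable :
    (∃ (V R D D₂ : Type) (iV : DecidableEq V) (iR : DecidableEq R)
      (G : KG V R D) (η : V → V → D₂) (u v u' v' : V),
      (∀ t : ℕ, @rwl2 V R D D₂ iV G η t u v = @rwl2 V R D D₂ iV G η t u' v') ∧
      @rawl2 V (R ⊕ R) D D₂ iV (@KG.aug V R D iV iR G) η 1 u v ≠
        @rawl2 V (R ⊕ R) D D₂ iV (@KG.aug V R D iV iR G) η 1 u' v') ∧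
    (∃ (V R D D₂ : Type) (iV : DecidableEq V) (iR : DecidableEq R)
      (G : KG V R D) (η : V → V → D₂) (u v u' v' : V),
      (∀ t : ℕ, @rawl2 V (R ⊕ R) D D₂ iV (@KG.aug V R D iV iR G) η t u v =
        @rawl2 V (R ⊕ R) D D₂ iV (@KG.aug V R D iV iR G) η t u' v') ∧
      @rwl2 V R D D₂ iV G η 1 u v ≠ @rwl2 V R D D₂ iV G η 1 u' v') := by
  constructor
  · exact ⟨Fin 3, Unit, Unit, Unit, inferInstance, inferInstance, G0, η0, 0, 0, 2, 2,
      part1_eq, part1_ne⟩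
  · exact ⟨Fin 3, Unit, Unit, Unit, inferInstance, inferInstance, G0, η0, 1, 2, 0, 2,
      fun t => congrFun (rawl2_const_indep G0.aug t 1 0) 2, part2_ne⟩
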